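/- Let q = 3^m with m ≥ 3 odd and Tr the trace to GF(3). The set of minimum-weight codewords of the code C(m,3) equals { ±(Tr((a x + b)^2) + h)_{x ∈ GF(q)} : (a,b) ∈ GF(q)* × GF(q) }, where h ∈ GF(3) is the unique element such that (Tr(x^2) + h)_{x ∈ GF(q)} has minimum weight. -/

import Mathlib

open Finset



set_option linter.unusedSectionVars false

section Aux
variable {F : Type} [Field F] [Fintype F] [DecidableEq F] [Algebra (ZMod 3) F]

lemma myCharF : CharP F 3 :=
  charP_of_injective_algebraMap (algebraMap (ZMod 3) F).injective 3

lemma myRingCharF : ringChar F = 3 := by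
  haveI := myCharF (F := F)
  exact ringChar.eq F 3

lemma card3mod4 (m : ℕ) (hmodd : Odd m) : 3 ^ m % 4 = 3 := by
  obtain ⟨k, rfl⟩ := hmodd
  have h9 : 9 ^ k % 4 = 1 := by
    have := Nat.pow_mod 9 k 4
    simpa using this
  have : 3 ^ (2 * k + 1) = 9 ^ k * 3 := by
    rw [pow_succ, pow_mul]; norm_num
  rw [this, Nat.mul_mod, h9]

lemma neg_one_not_square (m : ℕ) (hmodd : Odd m) (hF : Fintype.card F = 3 ^ m) :
    ¬ IsSquare (-1 : F) := by
  rw [FiniteField.isSquare_neg_one_iff, hF]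
  simp [card3mod4 m hmodd]

lemma quadChar_neg_one' (m : ℕ) (hmodd : Odd m) (hF : Fintype.card F = 3 ^ m) :
    quadraticChar F (-1) = -1 := by
  rw [quadraticChar_neg_one (by rw [myRingCharF]; norm_num)]
  rw [hF, ZMod.χ₄_nat_eq_if_mod_four]
  simp [card3mod4 m hmodd]
  exact Nat.odd_iff.mp (Odd.pow (by decide : Odd 3))

lemma three_eq_zero : (3 : F) = 0 := by
  haveI := myCharF (F := F)
  exact_mod_cast CharP.cast_eq_zero F 3

lemma sum_quadChar_hyperplane (m : ℕ) (hmodd : Odd m) (hF : Fintype.card F = 3 ^ m) :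
    ∑ z ∈ (univ.filter fun z : F => Algebra.trace (ZMod 3) F z = 0),
      quadraticChar F z = 0 := by
  refine Finset.sum_involution (fun z _ => -z) ?_ ?_ ?_ ?_
  · intro z hz
    have : quadraticChar F (-z) = quadraticChar F (-1) * quadraticChar F z := by
      rw [← map_mul, neg_one_mul]
    rw [this, quadChar_neg_one' m hmodd hF]
    ring
  · intro z hz hne h0
    have h : -z = z := h0
    have hz0 : z ≠ 0 := fun h0 => hne (by simp [h0])
    apply hz0
    have h2 : z + z = 0 := by linear_combination -h
    have h3 : (3 : F) * z = 0 := by rw [three_eq_zero]; ring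
    have : z = 0 := by
      have := sub_eq_zero.mpr (congrArg id h3)
      calc z = (3 : F) * z - (z + z) := by ring
        _ = 0 := by rw [h3, h2]; ring
    exact this
  · intro z hz
    simp only [mem_filter, mem_univ, true_and] at hz ⊢
    rw [map_neg, hz, neg_zero]
  · intro z hz; simp

lemma myTraceSurj : Function.Surjective (Algebra.trace (ZMod 3) F) := by
  exact Algebra.trace_surjective (ZMod 3) F

lemma card_fiber (m : ℕ) (hm : 1 ≤ m) (hF : Fintype.card F = 3 ^ m) (v : ZMod 3) :
    (univ.filter fun x : F => Algebra.trace (ZMod 3) F x = v).card = 3 ^ (m - 1) := by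
  have key : ∀ v : ZMod 3, (univ.filter fun x : F => Algebra.trace (ZMod 3) F x = v).card
      = (univ.filter fun x : F => Algebra.trace (ZMod 3) F x = 0).card := by
    intro v
    obtain ⟨x₀, hx₀⟩ := myTraceSurj (F := F) v
    apply Finset.card_equiv (Equiv.subRight x₀)
    intro i
    simp [Equiv.subRight, map_sub, hx₀, sub_eq_zero]
  have hsum : ∑ v : ZMod 3, (univ.filter fun x : F => Algebra.trace (ZMod 3) F x = v).card
      = Fintype.card F := by
    rw [← Finset.card_univ]
    exact (Finset.card_eq_sum_card_fiberwise (fun x _ => mem_univ _)).symm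
  have huniv : (univ : Finset (ZMod 3)) = {0, 1, 2} := by decide
  rw [huniv] at hsum
  rw [Finset.sum_insert (by decide), Finset.sum_insert (by decide),
    Finset.sum_singleton, key 1, key 2, hF] at hsum
  have h3 : 3 ^ m = 3 * 3 ^ (m - 1) := by
    rw [← pow_succ']
    congr 1
    omega
  rw [key v]
  omega

lemma card_N0 (m : ℕ) (hm : 1 ≤ m) (hmodd : Odd m) (hF : Fintype.card F = 3 ^ m) :
    (univ.filter fun x : F => Algebra.trace (ZMod 3) F (x ^ 2) = 0).card = 3 ^ (m - 1) := by
  classical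
  have hfib : (univ.filter fun x : F => Algebra.trace (ZMod 3) F (x ^ 2) = 0).card
      = ∑ z ∈ (univ.filter fun z : F => Algebra.trace (ZMod 3) F z = 0),
          (univ.filter fun x : F => x ^ 2 = z).card := by
    rw [Finset.card_eq_sum_card_fiberwise (f := fun x : F => x ^ 2)
      (t := univ.filter fun z : F => Algebra.trace (ZMod 3) F z = 0)
      (fun x hx => by
        simp only [mem_coe, mem_filter, mem_univ, true_and] at hx ⊢
        exact hx)]
    apply Finset.sum_congr rfl
    intro z hz
    congr 1
    ext x
    simp only [mem_filter, mem_univ, true_and] at hz ⊢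
    constructor
    · rintro ⟨_, h2⟩; exact h2
    · intro h2; exact ⟨by rw [h2]; exact hz, h2⟩
  have hcount : ∀ z : F, ((univ.filter fun x : F => x ^ 2 = z).card : ℤ)
      = quadraticChar F z + 1 := by
    intro z
    have hq := quadraticChar_card_sqrts (F := F) (by rw [myRingCharF]; norm_num) z
    rw [← hq]
    congr 1
    rw [Set.toFinset_setOf]
  have hZ : ((univ.filter fun x : F => Algebra.trace (ZMod 3) F (x ^ 2) = 0).card : ℤ)
      = ((univ.filter fun z : F => Algebra.trace (ZMod 3) F z = 0).card : ℤ) := by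
    rw [hfib]
    push_cast
    rw [Finset.sum_congr rfl (fun z _ => hcount z), Finset.sum_add_distrib,
      sum_quadChar_hyperplane m hmodd hF]
    simp
  have hfinal := card_fiber m hm hF 0
  have : (univ.filter fun x : F => Algebra.trace (ZMod 3) F (x ^ 2) = 0).card
      = (univ.filter fun z : F => Algebra.trace (ZMod 3) F z = 0).card := by
    exact_mod_cast hZ
  rw [this, hfinal]


lemma key_compl (w : ZMod 3) :
    (univ.filter fun x : F => Algebra.trace (ZMod 3) F (x ^ 2) + w ≠ 0).card
      + (univ.filter fun x : F => Algebra.trace (ZMod 3) F (x ^ 2) = -w).card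
    = Fintype.card F := by
  have e : (univ.filter fun x : F => ¬(Algebra.trace (ZMod 3) F (x ^ 2) + w ≠ 0))
      = (univ.filter fun x : F => Algebra.trace (ZMod 3) F (x ^ 2) = -w) := by
    apply Finset.filter_congr
    intro x _
    simp [not_not, add_eq_zero_iff_eq_neg]
  rw [← e, ← Finset.card_univ]
  exact Finset.card_filter_add_card_filter_not _

lemma W_val (m : ℕ) (hm : 3 ≤ m) (hmodd : Odd m) (hF : Fintype.card F = 3 ^ m)
    (h : ZMod 3)
    (hh : (univ.filter fun x : F => Algebra.trace (ZMod 3) F (x ^ 2) + h ≠ 0).card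
        = 2 * 3 ^ (m - 1) - 3 ^ ((m - 1) / 2)) (u : ZMod 3)
    (hu : (univ.filter fun x : F => Algebra.trace (ZMod 3) F (x ^ 2) + u ≠ 0).card
        = 2 * 3 ^ (m - 1) - 3 ^ ((m - 1) / 2)) : u = h := by
  have hB1 : 1 ≤ 3 ^ ((m - 1) / 2) := Nat.one_le_pow _ _ (by norm_num)
  have hBA : 3 ^ ((m - 1) / 2) ≤ 3 ^ (m - 1) :=
    Nat.pow_le_pow_right (by norm_num) (Nat.div_le_self _ 2)
  have hq : Fintype.card F = 3 * 3 ^ (m - 1) := by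
    rw [hF, ← pow_succ']
    congr 1
    omega
  have hN0 : (univ.filter fun x : F => Algebra.trace (ZMod 3) F (x ^ 2) = 0).card
      = 3 ^ (m - 1) := card_N0 m (by omega) hmodd hF
  have hNh := key_compl (F := F) h
  have hNu := key_compl (F := F) u
  rw [hh, hq] at hNh
  rw [hu, hq] at hNu
  -- N(-h) = A + B and N(-u) = A + B
  by_contra hne
  have hh0 : h ≠ 0 := by
    rintro rfl
    rw [neg_zero, hN0] at hNh
    omega
  have hu0 : u ≠ 0 := by
    rintro rfl
    rw [neg_zero, hN0] at hNu
    omega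
  -- partition
  have hsum : ∑ v : ZMod 3, (univ.filter fun x : F => Algebra.trace (ZMod 3) F (x ^ 2) = v).card
      = Fintype.card F := by
    rw [← Finset.card_univ]
    exact (Finset.card_eq_sum_card_fiberwise (fun x _ => mem_univ _)).symm
  have huniv : (univ : Finset (ZMod 3)) = {0, 1, 2} := by decide
  rw [huniv, Finset.sum_insert (by decide), Finset.sum_insert (by decide),
    Finset.sum_singleton, hq, hN0] at hsum
  have hcase : (h = 1 ∧ u = 2) ∨ (h = 2 ∧ u = 1) :=
    (by decide : ∀ a b : ZMod 3, a ≠ 0 → b ≠ 0 → b ≠ a → (a = 1 ∧ b = 2) ∨ (a = 2 ∧ b = 1))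
      h u hh0 hu0 hne
  rcases hcase with ⟨rfl, rfl⟩ | ⟨rfl, rfl⟩
  · rw [show (-(1 : ZMod 3)) = 2 by decide] at hNh
    rw [show (-(2 : ZMod 3)) = 1 by decide] at hNu
    omega
  · rw [show (-(2 : ZMod 3)) = 1 by decide] at hNh
    rw [show (-(1 : ZMod 3)) = 2 by decide] at hNu
    omega


lemma wt_affine (a : F) (ha : a ≠ 0) (b : F) (v : ZMod 3) :
    (univ.filter fun x : F => Algebra.trace (ZMod 3) F ((a * x + b) ^ 2) + v ≠ 0).card
    = (univ.filter fun x : F => Algebra.trace (ZMod 3) F (x ^ 2) + v ≠ 0).card := by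
  apply Finset.card_equiv ((Equiv.mulLeft₀ a ha).trans (Equiv.addRight b))
  intro x
  simp [Equiv.mulLeft₀]

lemma wt_shift (t : F) (p : F → Prop) [DecidablePred p] :
    (univ.filter fun x : F => p (x + t)).card = (univ.filter p).card := by
  apply Finset.card_equiv (Equiv.addRight t)
  intro x
  simp

lemma wt_scale (s : F) (hs : s ≠ 0) (p : F → Prop) [DecidablePred p] :
    (univ.filter fun x : F => p (s * x)).card = (univ.filter p).card := by
  apply Finset.card_equiv (Equiv.mulLeft₀ s hs)
  intro x
  simp [Equiv.mulLeft₀]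

end Aux

/-- for `m ≥ 3` odd and `h ∈ GF(3)` the (unique) element such that
`(Tr(x²) + h)_x` has minimum weight `d = 2·3^{m-1} - 3^{(m-1)/2}`, the set of
minimum-weight codewords of `C(m,3)` is
`{ ±(Tr((a x + b)²) + h)_x : a ∈ GF(q)*, b ∈ GF(q) }`. -/
theorem min_weight_codewords (m : ℕ) (hm : 3 ≤ m) (hmodd : Odd m)
    (F : Type) [Field F] [Fintype F] [DecidableEq F] [Algebra (ZMod 3) F]
    (hF : Fintype.card F = 3 ^ m)
    (h : ZMod 3)
    (hh : (Finset.univ.filter fun x : F =>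
        Algebra.trace (ZMod 3) F (x ^ 2) + h ≠ 0).card =
      2 * 3 ^ (m - 1) - 3 ^ ((m - 1) / 2)) :
    {c : F → ZMod 3 | (∃ a b : F, ∃ u : ZMod 3,
        c = fun x => Algebra.trace (ZMod 3) F (a * x ^ 2 + b * x) + u) ∧
      (Finset.univ.filter fun x : F => c x ≠ 0).card =
        2 * 3 ^ (m - 1) - 3 ^ ((m - 1) / 2)} =
    {c : F → ZMod 3 | ∃ ε : ZMod 3, (ε = 1 ∨ ε = -1) ∧ ∃ a b : F, a ≠ 0 ∧
        c = fun x => ε * (Algebra.trace (ZMod 3) F ((a * x + b) ^ 2) + h)} := by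
  have hB1 : 1 ≤ 3 ^ ((m - 1) / 2) := Nat.one_le_pow _ _ (by norm_num)
  have hBA : 3 ^ ((m - 1) / 2) ≤ 3 ^ (m - 1) :=
    Nat.pow_le_pow_right (by norm_num) (Nat.div_le_self _ 2)
  have hq : Fintype.card F = 3 * 3 ^ (m - 1) := by
    rw [hF, ← pow_succ']
    congr 1
    omega
  ext c
  simp only [Set.mem_setOf_eq]
  constructor
  · rintro ⟨⟨a, b, u, rfl⟩, hwt⟩
    replace hwt : (univ.filter fun x : F => Algebra.trace (ZMod 3) F (a * x ^ 2 + b * x) + u ≠ 0).card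
        = 2 * 3 ^ (m - 1) - 3 ^ ((m - 1) / 2) := hwt
    by_cases ha : a = 0
    · exfalso
      subst ha
      by_cases hb : b = 0
      · subst hb
        have e1 : (univ.filter fun x : F => Algebra.trace (ZMod 3) F ((0:F) * x ^ 2 + 0 * x) + u ≠ 0)
            = (univ.filter fun _ : F => u ≠ 0) := by
          apply Finset.filter_congr
          intro x _
          simp
        rw [e1] at hwt
        by_cases hu : u = 0
        · rw [hu] at hwt
          simp at hwt
          omega
        · rw [Finset.filter_true_of_mem (fun _ _ => hu), Finset.card_univ, hq] at hwt
          omega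
      · have e1 : (univ.filter fun x : F => Algebra.trace (ZMod 3) F ((0:F) * x ^ 2 + b * x) + u ≠ 0)
            = (univ.filter fun x : F => Algebra.trace (ZMod 3) F (b * x) + u ≠ 0) := by
          apply Finset.filter_congr
          intro x _
          simp
        rw [e1] at hwt
        have compl : (univ.filter fun x : F => Algebra.trace (ZMod 3) F (b * x) + u ≠ 0).card
            + (univ.filter fun x : F => Algebra.trace (ZMod 3) F (b * x) = -u).card = Fintype.card F := by
          have e : (univ.filter fun x : F => ¬(Algebra.trace (ZMod 3) F (b * x) + u ≠ 0))
              = (univ.filter fun x : F => Algebra.trace (ZMod 3) F (b * x) = -u) := by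
            apply Finset.filter_congr
            intro x _
            simp [not_not, add_eq_zero_iff_eq_neg]
          rw [← e, ← Finset.card_univ]
          exact Finset.card_filter_add_card_filter_not _
        have hfib : (univ.filter fun x : F => Algebra.trace (ZMod 3) F (b * x) = -u).card = 3 ^ (m - 1) := by
          have e2 : (univ.filter fun x : F => Algebra.trace (ZMod 3) F (b * x) = -u).card
              = (univ.filter fun y : F => Algebra.trace (ZMod 3) F y = -u).card :=
            wt_scale b hb (fun y : F => Algebra.trace (ZMod 3) F y = -u)
          rw [e2]
          exact card_fiber m (by omega) hF (-u)
        rw [hq] at compl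
        omega
    · -- a ≠ 0 : complete the square
      set t : F := -(b * a⁻¹) with ht
      have hat : a * t = -b := by
        rw [ht]
        field_simp
      have hrw : ∀ x : F, a * x ^ 2 + b * x = a * (x + t) ^ 2 - a * t ^ 2 := by
        intro x
        linear_combination (-2 * x) * hat + (b * x) * (three_eq_zero (F := F))
      have hwt' : (univ.filter fun x : F =>
          Algebra.trace (ZMod 3) F (a * x ^ 2) + (u - Algebra.trace (ZMod 3) F (a * t ^ 2)) ≠ 0).card = 2 * 3 ^ (m - 1) - 3 ^ ((m - 1) / 2) := by
        have e1 : (univ.filter fun x : F =>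
            (fun y : F => Algebra.trace (ZMod 3) F (a * y ^ 2) + (u - Algebra.trace (ZMod 3) F (a * t ^ 2)) ≠ 0) (x + t))
            = (univ.filter fun x : F => Algebra.trace (ZMod 3) F (a * x ^ 2 + b * x) + u ≠ 0) := by
          apply Finset.filter_congr
          intro x _
          dsimp only
          have e2 : Algebra.trace (ZMod 3) F (a * (x + t) ^ 2) + (u - Algebra.trace (ZMod 3) F (a * t ^ 2))
              = Algebra.trace (ZMod 3) F (a * x ^ 2 + b * x) + u := by
            rw [hrw x, map_sub]
            ring
          rw [e2]
        have e3 : (univ.filter fun x : F =>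
            (fun y : F => Algebra.trace (ZMod 3) F (a * y ^ 2) + (u - Algebra.trace (ZMod 3) F (a * t ^ 2)) ≠ 0) (x + t)).card
            = (univ.filter fun x : F =>
              Algebra.trace (ZMod 3) F (a * x ^ 2) + (u - Algebra.trace (ZMod 3) F (a * t ^ 2)) ≠ 0).card :=
          wt_shift t (fun y : F => Algebra.trace (ZMod 3) F (a * y ^ 2) + (u - Algebra.trace (ZMod 3) F (a * t ^ 2)) ≠ 0)
        rw [← e3, e1, hwt]
      by_cases hsqa : IsSquare a
      · obtain ⟨s, hs⟩ := hsqa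
        have hs0 : s ≠ 0 := fun h0 => ha (by rw [hs, h0, mul_zero])
        have hw2 : (univ.filter fun x : F =>
            Algebra.trace (ZMod 3) F (x ^ 2) + (u - Algebra.trace (ZMod 3) F (a * t ^ 2)) ≠ 0).card = 2 * 3 ^ (m - 1) - 3 ^ ((m - 1) / 2) := by
          have e1 : (univ.filter fun x : F =>
              (fun y : F => Algebra.trace (ZMod 3) F (y ^ 2) + (u - Algebra.trace (ZMod 3) F (a * t ^ 2)) ≠ 0) (s * x))
              = (univ.filter fun x : F =>
                Algebra.trace (ZMod 3) F (a * x ^ 2) + (u - Algebra.trace (ZMod 3) F (a * t ^ 2)) ≠ 0) := by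
            apply Finset.filter_congr
            intro x _
            dsimp only
            have e2 : (s * x) ^ 2 = a * x ^ 2 := by rw [hs]; ring
            rw [e2]
          have e3 : (univ.filter fun x : F =>
              (fun y : F => Algebra.trace (ZMod 3) F (y ^ 2) + (u - Algebra.trace (ZMod 3) F (a * t ^ 2)) ≠ 0) (s * x)).card
              = (univ.filter fun x : F =>
                Algebra.trace (ZMod 3) F (x ^ 2) + (u - Algebra.trace (ZMod 3) F (a * t ^ 2)) ≠ 0).card :=
            wt_scale s hs0 (fun y : F => Algebra.trace (ZMod 3) F (y ^ 2) + (u - Algebra.trace (ZMod 3) F (a * t ^ 2)) ≠ 0)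
          rw [← e3, e1, hwt']
        have hu' : u - Algebra.trace (ZMod 3) F (a * t ^ 2) = h := W_val m hm hmodd hF h hh _ hw2
        refine ⟨1, Or.inl rfl, s, s * t, hs0, ?_⟩
        funext x
        have hx : (s * x + s * t) ^ 2 = a * (x + t) ^ 2 := by rw [hs]; ring
        rw [one_mul, hx, ← hu', hrw x, map_sub]
        ring
      · have hrc : ringChar F ≠ 2 := by rw [myRingCharF]; norm_num
        have hχa : quadraticChar F a = -1 := by
          rcases quadraticChar_dichotomy ha with h1 | h1
          · exact absurd ((quadraticChar_one_iff_isSquare ha).mp h1) hsqa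
          · exact h1
        have hsq2 : IsSquare (-a) := by
          apply (quadraticChar_one_iff_isSquare (neg_ne_zero.mpr ha)).mp
          rw [show (-a) = (-1) * a by ring, map_mul, quadChar_neg_one' m hmodd hF, hχa]
          norm_num
        obtain ⟨s, hs⟩ := hsq2
        have hs0 : s ≠ 0 := by
          rintro rfl
          rw [mul_zero] at hs
          exact ha (neg_eq_zero.mp hs)
        have hw2 : (univ.filter fun x : F =>
            Algebra.trace (ZMod 3) F (x ^ 2) + (-(u - Algebra.trace (ZMod 3) F (a * t ^ 2))) ≠ 0).card = 2 * 3 ^ (m - 1) - 3 ^ ((m - 1) / 2) := by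
          have e1 : (univ.filter fun x : F =>
              (fun y : F => Algebra.trace (ZMod 3) F (y ^ 2) + (-(u - Algebra.trace (ZMod 3) F (a * t ^ 2))) ≠ 0) (s * x))
              = (univ.filter fun x : F =>
                Algebra.trace (ZMod 3) F (a * x ^ 2) + (u - Algebra.trace (ZMod 3) F (a * t ^ 2)) ≠ 0) := by
            apply Finset.filter_congr
            intro x _
            dsimp only
            have e2 : (s * x) ^ 2 = -(a * x ^ 2) := by linear_combination x ^ 2 * hs.symm
            rw [e2, map_neg]
            rw [show -(Algebra.trace (ZMod 3) F (a * x ^ 2)) + (-(u - Algebra.trace (ZMod 3) F (a * t ^ 2)))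
              = -(Algebra.trace (ZMod 3) F (a * x ^ 2) + (u - Algebra.trace (ZMod 3) F (a * t ^ 2))) by ring]
            rw [neg_ne_zero]
          have e3 : (univ.filter fun x : F =>
              (fun y : F => Algebra.trace (ZMod 3) F (y ^ 2) + (-(u - Algebra.trace (ZMod 3) F (a * t ^ 2))) ≠ 0) (s * x)).card
              = (univ.filter fun x : F =>
                Algebra.trace (ZMod 3) F (x ^ 2) + (-(u - Algebra.trace (ZMod 3) F (a * t ^ 2))) ≠ 0).card :=
            wt_scale s hs0 (fun y : F => Algebra.trace (ZMod 3) F (y ^ 2) + (-(u - Algebra.trace (ZMod 3) F (a * t ^ 2))) ≠ 0)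
          rw [← e3, e1, hwt']
        have hu' : -(u - Algebra.trace (ZMod 3) F (a * t ^ 2)) = h := W_val m hm hmodd hF h hh _ hw2
        refine ⟨-1, Or.inr rfl, s, s * t, hs0, ?_⟩
        funext x
        have hx : (s * x + s * t) ^ 2 = -(a * (x + t) ^ 2) := by
          linear_combination (x + t) ^ 2 * hs.symm
        rw [hx, map_neg, ← hu', hrw x, map_sub]
        ring
  · rintro ⟨ε, hε, a, b, ha, rfl⟩
    have hε0 : ε ≠ 0 := by rcases hε with rfl | rfl <;> decide
    constructor
    · refine ⟨algebraMap (ZMod 3) F ε * a ^ 2, algebraMap (ZMod 3) F ε * (2 * a * b),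
        ε * Algebra.trace (ZMod 3) F (b ^ 2) + ε * h, ?_⟩
      funext x
      have smul : ∀ w : F, ε * Algebra.trace (ZMod 3) F w = Algebra.trace (ZMod 3) F (algebraMap (ZMod 3) F ε * w) := by
        intro w
        rw [← Algebra.smul_def, map_smul, smul_eq_mul]
      rw [mul_add, smul ((a * x + b) ^ 2)]
      rw [show (algebraMap (ZMod 3) F ε) * (a * x + b) ^ 2
          = (algebraMap (ZMod 3) F ε * a ^ 2 * x ^ 2
            + algebraMap (ZMod 3) F ε * (2 * a * b) * x)
            + algebraMap (ZMod 3) F ε * b ^ 2 by ring, map_add, ← smul (b ^ 2)]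
      ring
    · show (univ.filter fun x : F => ε * (Algebra.trace (ZMod 3) F ((a * x + b) ^ 2) + h) ≠ 0).card = 2 * 3 ^ (m - 1) - 3 ^ ((m - 1) / 2)
      have e1 : (univ.filter fun x : F => ε * (Algebra.trace (ZMod 3) F ((a * x + b) ^ 2) + h) ≠ 0)
          = (univ.filter fun x : F => Algebra.trace (ZMod 3) F ((a * x + b) ^ 2) + h ≠ 0) := by
        apply Finset.filter_congr
        intro x _
        simp [mul_eq_zero, hε0]
      rw [e1, wt_affine a ha b h, hh]
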